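/- Let X be a continuous random variable with PDF f and CDF F supported on (l, r), let x₀ ∈ (l, r), and let g be a continuously differentiable function with g(x) > 0 and g'(x) < 0 for all x ∈ (x₀, r). Define P(x) = -f(x) · g(x)/g'(x) and suppose P(x) → 0 as x → r. If x ↦ f(x)/(-g'(x)) is monotone increasing on (x₀, r), then 1 - F(x) ≥ P(x) for all x ∈ (x₀, r). -/

import Mathlib

open MeasureTheory Set Filter
/-- Theorem 1 (upper bound): for a RV supported on `(l, r)` with CDF `F` and
continuously differentiable PDF `f`, if `g > 0`, `g' < 0` on `(x₀, r)`,
`P x = -f x * g x / g' x` tends to `0` as `x → r⁻`, and `f / (-g')` is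
increasing on `(x₀, r)`, then `1 - F x ≥ P x` on `(x₀, r)`. -/
theorem stmt_3 (μ : Measure ℝ) [IsProbabilityMeasure μ]
    (l r : EReal) (hlr : l < r)
    (F f g P : ℝ → ℝ)
    (hFdef : ∀ x, F x = (μ (Iic x)).toReal)
    (hsupp : μ {x : ℝ | ¬ (l < (x : EReal) ∧ (x : EReal) < r)} = 0)
    (hf : ∀ x : ℝ, l < (x : EReal) → (x : EReal) < r → HasDerivAt F (f x) x)
    (hfdiff : ∀ x : ℝ, l < (x : EReal) → (x : EReal) < r → DifferentiableAt ℝ f x)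
    (hfC : ContinuousOn (deriv f) {x : ℝ | l < (x : EReal) ∧ (x : EReal) < r})
    (x₀ : ℝ) (hx₀l : l < (x₀ : EReal)) (hx₀r : (x₀ : EReal) < r)
    (hgdiff : ∀ x : ℝ, x₀ < x → (x : EReal) < r → DifferentiableAt ℝ g x)
    (hgC : ContinuousOn (deriv g) {x : ℝ | x₀ < x ∧ (x : EReal) < r})
    (hgpos : ∀ x : ℝ, x₀ < x → (x : EReal) < r → 0 < g x)
    (hg' : ∀ x : ℝ, x₀ < x → (x : EReal) < r → deriv g x < 0)
    (hP : ∀ x, P x = -f x * (g x / deriv g x))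
    (hPlim : Tendsto P (comap (fun x : ℝ => (x : EReal)) (nhdsWithin r (Iio r)))
      (nhds 0))
    (hmono : MonotoneOn (fun x => f x / (-deriv g x))
      {x : ℝ | x₀ < x ∧ (x : EReal) < r}) :
    ∀ x : ℝ, x₀ < x → (x : EReal) < r → 1 - F x ≥ P x := by
  intro x hx₀x hxr
  set L := comap (fun x : ℝ => (x : EReal)) (nhdsWithin r (Iio r)) with hL
  have hnb : (nhdsWithin r (Iio r)).NeBot :=
    nhdsWithin_Iio_self_neBot' ⟨(x₀ : EReal), hx₀r⟩
  have hne : L.NeBot := by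
    rw [hL, Filter.comap_neBot_iff]
    intro U hU
    have h1 : Ioi (x₀ : EReal) ∈ nhdsWithin r (Iio r) :=
      mem_nhdsWithin_of_mem_nhds (isOpen_Ioi.mem_nhds hx₀r)
    have h2 : Iio r ∈ nhdsWithin r (Iio r) := self_mem_nhdsWithin
    obtain ⟨z, ⟨hzU, hz1⟩, hz2⟩ := hnb.nonempty_of_mem (inter_mem (inter_mem hU h1) h2)
    have hzbot : z ≠ ⊥ := ne_of_gt (lt_trans (EReal.bot_lt_coe x₀) hz1)
    have hztop : z ≠ ⊤ := ne_of_lt (lt_of_lt_of_le hz2 le_top)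
    exact ⟨z.toReal, by rwa [EReal.coe_toReal hztop hzbot]⟩
  have key : ∀ y : ℝ, x < y → (y : EReal) < r → P x - P y ≤ 1 - F x := by
    intro y hxy hyr
    have hgx' := hg' x hx₀x hxr
    have hgy' := hg' y (lt_trans hx₀x hxy) hyr
    set c := f x / (-deriv g x) with hc
    have hmem : ∀ t ∈ Icc x y, x₀ < t ∧ l < (t : EReal) ∧ (t : EReal) < r := by
      intro t ht
      refine ⟨lt_of_lt_of_le hx₀x ht.1, ?_, ?_⟩
      · exact lt_trans hx₀l (EReal.coe_lt_coe_iff.2 (lt_of_lt_of_le hx₀x ht.1))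
      · exact lt_of_le_of_lt (EReal.coe_le_coe_iff.2 ht.2) hyr
    have hmono' : MonotoneOn (fun t => F t + c * g t) (Icc x y) := by
      apply monotoneOn_of_deriv_nonneg (convex_Icc x y)
      · intro t ht
        obtain ⟨h1, h2, h3⟩ := hmem t ht
        exact ((hf t h2 h3).differentiableAt.continuousAt.add
          ((hgdiff t h1 h3).const_mul c).continuousAt).continuousWithinAt
      · intro t ht
        rw [interior_Icc] at ht
        obtain ⟨h1, h2, h3⟩ := hmem t (Ioo_subset_Icc_self ht)
        exact ((hf t h2 h3).differentiableAt.add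
          ((hgdiff t h1 h3).const_mul c)).differentiableWithinAt
      · intro t ht
        rw [interior_Icc] at ht
        obtain ⟨h1, h2, h3⟩ := hmem t (Ioo_subset_Icc_self ht)
        have hd : HasDerivAt (fun t => F t + c * g t) (f t + c * deriv g t) t :=
          (hf t h2 h3).add ((hgdiff t h1 h3).hasDerivAt.const_mul c)
        rw [hd.deriv]
        have hgt' := hg' t h1 h3
        have hr : c ≤ f t / (-deriv g t) :=
          hmono ⟨hx₀x, hxr⟩ ⟨h1, h3⟩ (le_of_lt ht.1)
        rw [le_div_iff₀ (by linarith : (0:ℝ) < -deriv g t)] at hr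
        linarith
    have hineq := hmono' (left_mem_Icc.2 hxy.le) (right_mem_Icc.2 hxy.le) hxy.le
    have hFy1 : F y ≤ 1 := by
      rw [hFdef]
      have := ENNReal.toReal_mono ENNReal.one_ne_top (prob_le_one (μ := μ) (s := Iic y))
      simpa using this
    have hPx : P x = c * g x := by
      rw [hP, hc]
      field_simp
    have hPy : c * g y ≤ P y := by
      have hr : c ≤ f y / (-deriv g y) :=
        hmono ⟨hx₀x, hxr⟩ ⟨lt_trans hx₀x hxy, hyr⟩ hxy.le
      have hgy := hgpos y (lt_trans hx₀x hxy) hyr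
      calc c * g y ≤ (f y / (-deriv g y)) * g y := mul_le_mul_of_nonneg_right hr hgy.le
        _ = P y := by rw [hP]; field_simp
    simp only at hineq
    linarith
  have hev : ∀ᶠ y in L, P x - P y ≤ 1 - F x := by
    have hS : (fun y : ℝ => (y : EReal)) ⁻¹' (Ioi (x : EReal) ∩ Iio r) ∈ L :=
      preimage_mem_comap (inter_mem
        (mem_nhdsWithin_of_mem_nhds (isOpen_Ioi.mem_nhds hxr)) self_mem_nhdsWithin)
    filter_upwards [hS] with y hy
    exact key y (EReal.coe_lt_coe_iff.1 hy.1) hy.2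
  have htend : Tendsto (fun y => P x - P y) L (nhds (P x - 0)) :=
    tendsto_const_nhds.sub hPlim
  have hfin := le_of_tendsto htend hev
  simp only [sub_zero] at hfin
  exact hfin
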